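/- Let V be a real vector space and I a set. Then every I-indexed family of norms on V is dominated if and only if at least one of the following holds: (i) V is finite-dimensional; (ii) I is finite; (iii) V has countable dimension and the cardinality of I is strictly less than the bounding number 𝔟; (iv) I is countable and the dimension of V is strictly less than 𝔟. -/

import Mathlib

universe u v

/-- `N` is a norm on the real vector space `V`. -/
def IsNorm {V : Type*} [AddCommGroup V] [Module ℝ V] (N : V → ℝ) : Prop :=
  (∀ x, 0 ≤ N x) ∧ (∀ x, N x = 0 ↔ x = 0) ∧
    (∀ (a : ℝ) (x : V), N (a • x) = |a| * N x) ∧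
    ∀ x y, N (x + y) ≤ N x + N y

/-- The bounding number `𝔟`: the least cardinality of a subset of `ℕ → ℕ` that is
unbounded for eventual domination. -/
noncomputable def boundingNumber : Cardinal.{0} :=
  sInf {c : Cardinal.{0} | ∃ X : Set (ℕ → ℕ), Cardinal.mk X = c ∧
    ¬ ∃ g : ℕ → ℕ, ∀ f ∈ X, ∃ n : ℕ, ∀ k ≥ n, f k ≤ g k}

open Cardinal Finsupp

section wnorm
variable {V : Type u} [AddCommGroup V] [Module ℝ V] {B : Type*} (bV : Module.Basis B ℝ V)

/-- weighted ℓ¹ norm w.r.t. a basis -/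
noncomputable def wNorm (w : B → ℝ) (x : V) : ℝ :=
  (bV.repr x).sum fun b r => w b * |r|

lemma wNorm_eq_sum (w : B → ℝ) (x : V) {s : Finset B} (hs : (bV.repr x).support ⊆ s) :
    wNorm bV w x = ∑ b ∈ s, w b * |bV.repr x b| := by
  rw [wNorm, Finsupp.sum_of_support_subset _ hs]
  intro b _
  simp

lemma wNorm_basis (w : B → ℝ) (b : B) : wNorm bV w (bV b) = w b := by
  rw [wNorm, bV.repr_self, Finsupp.sum_single_index (by simp)]
  simp

lemma isNorm_wNorm {w : B → ℝ} (hw : ∀ b, 0 < w b) : IsNorm (wNorm bV w) := by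
  classical
  refine ⟨fun x => ?_, fun x => ?_, fun a x => ?_, fun x y => ?_⟩
  · rw [wNorm_eq_sum bV w x (subset_refl _)]
    exact Finset.sum_nonneg fun b _ => mul_nonneg (hw b).le (abs_nonneg _)
  · constructor
    · intro h
      rw [wNorm_eq_sum bV w x (subset_refl _)] at h
      have hz : ∀ b ∈ (bV.repr x).support, w b * |bV.repr x b| = 0 :=
        (Finset.sum_eq_zero_iff_of_nonneg
          (fun b _ => mul_nonneg (hw b).le (abs_nonneg _))).1 h
      have : bV.repr x = 0 := by
        ext b
        by_cases hb : b ∈ (bV.repr x).support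
        · have := hz b hb
          rcases mul_eq_zero.1 this with h' | h'
          · exact absurd h' (hw b).ne'
          · simpa using abs_eq_zero.1 h'
        · simpa using Finsupp.notMem_support_iff.1 hb
      simpa using congrArg bV.repr.symm this
    · rintro rfl; simp [wNorm]
  · have hsupp : (bV.repr (a • x)).support ⊆ (bV.repr x).support := by
      rw [map_smul]
      exact Finsupp.support_smul
    rw [wNorm_eq_sum bV w (a • x) hsupp, wNorm_eq_sum bV w x (subset_refl _),
      Finset.mul_sum]
    refine Finset.sum_congr rfl fun b _ => ?_
    rw [map_smul]
    simp [abs_mul]; ring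
  · have hx : (bV.repr (x + y)).support ⊆ (bV.repr x).support ∪ (bV.repr y).support := by
      rw [map_add]; exact Finsupp.support_add
    rw [wNorm_eq_sum bV w (x + y) hx,
      wNorm_eq_sum bV w x (Finset.subset_union_left),
      wNorm_eq_sum bV w y (Finset.subset_union_right), ← Finset.sum_add_distrib]
    refine Finset.sum_le_sum fun b _ => ?_
    rw [map_add]
    calc w b * |bV.repr x b + bV.repr y b| ≤ w b * (|bV.repr x b| + |bV.repr y b|) := by
          exact mul_le_mul_of_nonneg_left (abs_add_le _ _) (hw b).le
      _ = _ := by ring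

lemma IsNorm.finsum_le {N : V → ℝ} (hN : IsNorm N) {β : Type*} (s : Finset β) (f : β → V) :
    N (∑ b ∈ s, f b) ≤ ∑ b ∈ s, N (f b) := by
  classical
  induction s using Finset.induction with
  | empty => simp; rw [(hN.2.1 0).2 rfl]
  | insert _ _ hns ih =>
    rw [Finset.sum_insert hns, Finset.sum_insert hns]
    exact le_trans (hN.2.2.2 _ _) (by linarith)

/-- domination by weighted norm -/
lemma le_wNorm {N : V → ℝ} (hN : IsNorm N) {w : B → ℝ} (hw : ∀ b, 0 < w b)
    {c : ℝ} (hc : 0 < c) (h : ∀ b, N (bV b) ≤ c * w b) (x : V) :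
    N x ≤ c * wNorm bV w x := by
  conv_lhs => rw [← bV.linearCombination_repr x]
  rw [Finsupp.linearCombination_apply, Finsupp.sum]
  calc N (∑ b ∈ (bV.repr x).support, bV.repr x b • bV b)
      ≤ ∑ b ∈ (bV.repr x).support, N (bV.repr x b • bV b) := hN.finsum_le _ _
    _ ≤ ∑ b ∈ (bV.repr x).support, |bV.repr x b| * (c * w b) := by
        refine Finset.sum_le_sum fun b _ => ?_
        rw [hN.2.2.1]
        exact mul_le_mul_of_nonneg_left (h b) (abs_nonneg _)
    _ = c * wNorm bV w x := by
        rw [wNorm_eq_sum bV w x (subset_refl _), Finset.mul_sum]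
        exact Finset.sum_congr rfl fun b _ => by ring

end wnorm




lemma unbounded_univ :
    ¬ ∃ g : ℕ → ℕ, ∀ f ∈ (Set.univ : Set (ℕ → ℕ)), ∃ n : ℕ, ∀ k ≥ n, f k ≤ g k := by
  rintro ⟨g, hg⟩
  obtain ⟨n, hn⟩ := hg (fun k => g k + 1) (Set.mem_univ _)
  exact absurd (hn n le_rfl) (by omega)

lemma boundingNumber_spec :
    ∃ X : Set (ℕ → ℕ), Cardinal.mk X = boundingNumber ∧
      ¬ ∃ g : ℕ → ℕ, ∀ f ∈ X, ∃ n : ℕ, ∀ k ≥ n, f k ≤ g k := by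
  have : boundingNumber ∈ {c : Cardinal.{0} | ∃ X : Set (ℕ → ℕ), Cardinal.mk X = c ∧
      ¬ ∃ g : ℕ → ℕ, ∀ f ∈ X, ∃ n : ℕ, ∀ k ≥ n, f k ≤ g k} :=
    csInf_mem ⟨_, Set.univ, rfl, unbounded_univ⟩
  exact this

lemma bounded_of_lt {α : Type w} (F : α → ℕ → ℕ)
    (h : Cardinal.mk α < Cardinal.lift.{w} boundingNumber) :
    ∃ g : ℕ → ℕ, ∀ a, ∃ n : ℕ, ∀ k ≥ n, F a k ≤ g k := by
  by_contra hc
  push_neg at hc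
  have hub : ¬ ∃ g : ℕ → ℕ, ∀ f ∈ Set.range F, ∃ n : ℕ, ∀ k ≥ n, f k ≤ g k := by
    rintro ⟨g, hg⟩
    obtain ⟨a, ha⟩ := hc g
    obtain ⟨n, hn⟩ := hg (F a) (Set.mem_range_self a)
    obtain ⟨k, hk, hk'⟩ := ha n
    exact absurd (hn k hk) (by omega)
  have h1 : boundingNumber ≤ Cardinal.mk (Set.range F) :=
    csInf_le' ⟨Set.range F, rfl, hub⟩
  have h2 : Cardinal.lift.{w} (Cardinal.mk (Set.range F)) ≤ Cardinal.mk α := by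
    simpa [Cardinal.lift_uzero] using Cardinal.mk_range_le_lift (f := F)
  exact absurd (le_trans (Cardinal.lift_monotone h1) h2) (not_le.2 h)

/-- main combinatorial matrix lemma -/
lemma matrix_dom {A : Type w} {B : Type w'} [Countable B] (M : A → B → ℝ)
    (h : Cardinal.mk A < Cardinal.lift.{w} boundingNumber) :
    ∃ c : A → ℝ, ∃ w : B → ℝ, (∀ a, 1 ≤ c a) ∧ (∀ b, 1 ≤ w b) ∧
      ∀ a b, M a b ≤ c a * w b := by
  classical
  obtain ⟨ι, hι⟩ := Countable.exists_injective_nat B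
  set F : A → ℕ → ℕ := fun a => Function.extend ι (fun b => ⌈M a b⌉₊) (fun _ => 0) with hF
  obtain ⟨g, hg⟩ := bounded_of_lt F h
  choose nn hnn using hg
  set T : A → Finset B := fun a => (Finset.range (nn a)).preimage ι (hι.injOn) with hT
  have hsum : ∀ a, (0:ℝ) ≤ ∑ b ∈ T a, (|M a b| + 1) :=
    fun a => Finset.sum_nonneg fun b _ => by positivity
  refine ⟨fun a => 1 + ∑ b ∈ T a, (|M a b| + 1),
    fun b => (g (ι b) : ℝ) + 1, fun a => by simpa using hsum a, fun b => by simp only []; have : (0:ℝ) ≤ g (ι b) := Nat.cast_nonneg _; linarith, ?_⟩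
  intro a b
  have hc1 : (1:ℝ) ≤ 1 + ∑ b ∈ T a, (|M a b| + 1) := by simpa using hsum a
  have hw1 : (1:ℝ) ≤ (g (ι b) : ℝ) + 1 := by have : (0:ℝ) ≤ g (ι b) := Nat.cast_nonneg _; linarith
  by_cases hb : nn a ≤ ι b
  · have h1 : M a b ≤ (⌈M a b⌉₊ : ℝ) := Nat.le_ceil _
    have h2 : F a (ι b) = ⌈M a b⌉₊ := hι.extend_apply _ _ _
    have h3 : ⌈M a b⌉₊ ≤ g (ι b) := h2 ▸ hnn a (ι b) hb
    calc M a b ≤ (g (ι b) : ℝ) := le_trans h1 (by exact_mod_cast h3)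
      _ ≤ (g (ι b) : ℝ) + 1 := by linarith
      _ = 1 * ((g (ι b) : ℝ) + 1) := by ring
      _ ≤ _ := by
          exact mul_le_mul_of_nonneg_right hc1 (by positivity)
  · have hbT : b ∈ T a := by
      simp only [hT, Finset.mem_preimage, Finset.mem_range]
      omega
    have h4 : M a b ≤ ∑ b ∈ T a, (|M a b| + 1) := by
      calc M a b ≤ |M a b| + 1 := by
            have := le_abs_self (M a b); linarith
        _ ≤ _ := Finset.single_le_sum (f := fun b => |M a b| + 1)
            (fun b _ => by positivity) hbT
    calc M a b ≤ 1 + ∑ b ∈ T a, (|M a b| + 1) := by linarith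
      _ = (1 + ∑ b ∈ T a, (|M a b| + 1)) * 1 := by ring
      _ ≤ _ := mul_le_mul_of_nonneg_left hw1 (by linarith)

open Cardinal

section fin
variable {A : Type*} {B : Type*}

lemma matrix_dom_finite_right [Finite B] (M : A → B → ℝ) :
    ∃ c : A → ℝ, ∃ w : B → ℝ, (∀ a, 1 ≤ c a) ∧ (∀ b, 1 ≤ w b) ∧
      ∀ a b, M a b ≤ c a * w b := by
  classical
  have := Fintype.ofFinite B
  have hsum : ∀ a, (0:ℝ) ≤ ∑ b, (|M a b| + 1) :=
    fun a => Finset.sum_nonneg fun b _ => by positivity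
  refine ⟨fun a => 1 + ∑ b, (|M a b| + 1), fun _ => 1,
    fun a => by simpa using hsum a, fun _ => le_rfl, fun a b => ?_⟩
  have h4 : M a b ≤ ∑ b, (|M a b| + 1) := by
    calc M a b ≤ |M a b| + 1 := by have := le_abs_self (M a b); linarith
      _ ≤ _ := Finset.single_le_sum (f := fun b => |M a b| + 1)
          (fun b _ => by positivity) (Finset.mem_univ b)
  simp only [mul_one]
  linarith

lemma matrix_dom_finite_left [Finite A] (M : A → B → ℝ) :
    ∃ c : A → ℝ, ∃ w : B → ℝ, (∀ a, 1 ≤ c a) ∧ (∀ b, 1 ≤ w b) ∧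
      ∀ a b, M a b ≤ c a * w b := by
  obtain ⟨c, w, hc, hw, h⟩ := matrix_dom_finite_right (fun b a => M a b)
  exact ⟨w, c, hw, hc, fun a b => by rw [mul_comm]; exact h b a⟩

end fin


section forward
variable {V : Type u} [AddCommGroup V] [Module ℝ V] {B : Type u} {I : Type v}

/-- Case: countably infinite basis, at least 𝔟 many norms. -/
lemma forward_caseB (bV : Module.Basis B ℝ V) (e : B ≃ ℕ) (hI : Cardinal.lift.{v} boundingNumber ≤ Cardinal.mk I) :
    ¬ (∀ N : I → V → ℝ, (∀ i, IsNorm (N i)) →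
        ∃ N' : V → ℝ, IsNorm N' ∧ ∀ i, ∃ c : ℝ, 0 < c ∧ ∀ x, N i x ≤ c * N' x) := by
  classical
  obtain ⟨X, hX, hXub⟩ := boundingNumber_spec
  have hle : Cardinal.lift.{v} (Cardinal.mk X) ≤ Cardinal.lift.{0} (Cardinal.mk I) := by
    rw [hX, Cardinal.lift_uzero]; exact hI
  obtain ⟨j⟩ := Cardinal.lift_mk_le'.mp hle
  intro hdom
  set NN : I → V → ℝ := Function.extend j
    (fun f => wNorm bV (fun b => (f.1 (e b) : ℝ) + 1))
    (fun _ => wNorm bV (fun _ => 1)) with hNN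
  have hnorm : ∀ i, IsNorm (NN i) := by
    intro i
    rw [hNN, Function.extend_def]
    split
    · exact isNorm_wNorm bV (fun b => by positivity)
    · exact isNorm_wNorm bV (fun b => one_pos)
  obtain ⟨N', hN', hdom'⟩ := hdom NN hnorm
  choose c hc hcle using hdom'
  refine hXub ⟨fun n => ⌈(n : ℝ) * N' (bV (e.symm n))⌉₊, ?_⟩
  intro f hf
  set ff : X := ⟨f, hf⟩
  have hNj : NN (j ff) = wNorm bV (fun b => (f (e b) : ℝ) + 1) := by
    rw [hNN]
    exact j.injective.extend_apply _ _ _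
  have heval : ∀ n : ℕ, (f n : ℝ) + 1 ≤ c (j ff) * N' (bV (e.symm n)) := by
    intro n
    have h1 := hcle (j ff) (bV (e.symm n))
    rw [hNj, wNorm_basis] at h1
    simpa using h1
  refine ⟨⌈c (j ff)⌉₊, fun k hk => ?_⟩
  have hu : (0:ℝ) ≤ N' (bV (e.symm k)) := hN'.1 _
  have hck : c (j ff) ≤ (k : ℝ) := by
    calc c (j ff) ≤ (⌈c (j ff)⌉₊ : ℝ) := Nat.le_ceil _
      _ ≤ (k : ℝ) := by exact_mod_cast hk
  have h2 : (f k : ℝ) ≤ (k : ℝ) * N' (bV (e.symm k)) := by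
    have := heval k
    nlinarith [mul_le_mul_of_nonneg_right hck hu]
  exact_mod_cast le_trans h2 (Nat.le_ceil _)

/-- Case: countably infinite index, basis of size at least 𝔟. -/
lemma forward_caseC2 (bV : Module.Basis B ℝ V) (e : I ≃ ℕ) (hB : Cardinal.lift.{u} boundingNumber ≤ Cardinal.mk B) :
    ¬ (∀ N : I → V → ℝ, (∀ i, IsNorm (N i)) →
        ∃ N' : V → ℝ, IsNorm N' ∧ ∀ i, ∃ c : ℝ, 0 < c ∧ ∀ x, N i x ≤ c * N' x) := by
  classical
  obtain ⟨X, hX, hXub⟩ := boundingNumber_spec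
  have hle : Cardinal.lift.{u} (Cardinal.mk X) ≤ Cardinal.lift.{0} (Cardinal.mk B) := by
    rw [hX, Cardinal.lift_uzero]; exact hB
  obtain ⟨j⟩ := Cardinal.lift_mk_le'.mp hle
  intro hdom
  set wt : ℕ → B → ℝ := fun n => Function.extend j (fun f => (f.1 n : ℝ) + 1) (fun _ => 1)
    with hwt
  have hwtpos : ∀ n b, 0 < wt n b := by
    intro n b
    rw [hwt]
    simp only [Function.extend_def]
    split
    · positivity
    · exact one_pos
  set NN : I → V → ℝ := fun i => wNorm bV (wt (e i)) with hNN
  have hnorm : ∀ i, IsNorm (NN i) := fun i => isNorm_wNorm bV (fun b => hwtpos _ b)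
  obtain ⟨N', hN', hdom'⟩ := hdom NN hnorm
  choose c hc hcle using hdom'
  refine hXub ⟨fun n => ⌈(n : ℝ) * c (e.symm n)⌉₊, ?_⟩
  intro f hf
  set ff : X := ⟨f, hf⟩
  have heval : ∀ n : ℕ, (f n : ℝ) + 1 ≤ c (e.symm n) * N' (bV (j ff)) := by
    intro n
    have h1 := hcle (e.symm n) (bV (j ff))
    rw [hNN] at h1
    simp only [wNorm_basis] at h1
    have h2 : wt (e (e.symm n)) (j ff) = (f n : ℝ) + 1 := by
      rw [e.apply_symm_apply, hwt]
      exact j.injective.extend_apply _ _ _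
    rw [h2] at h1
    exact h1
  refine ⟨⌈N' (bV (j ff))⌉₊, fun k hk => ?_⟩
  have hcnn : (0:ℝ) ≤ c (e.symm k) := (hc _).le
  have huk : N' (bV (j ff)) ≤ (k : ℝ) := by
    calc N' (bV (j ff)) ≤ (⌈N' (bV (j ff))⌉₊ : ℝ) := Nat.le_ceil _
      _ ≤ (k : ℝ) := by exact_mod_cast hk
  have h2 : (f k : ℝ) ≤ (k : ℝ) * c (e.symm k) := by
    have := heval k
    nlinarith [mul_le_mul_of_nonneg_left huk hcnn]
  exact_mod_cast le_trans h2 (Nat.le_ceil _)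

end forward

section sierp
variable {V : Type u} [AddCommGroup V] [Module ℝ V] {B : Type u} {I : Type v}

/-- Case: both the index set and the dimension are uncountable. -/
lemma forward_caseC1 (bV : Module.Basis B ℝ V) {W : Type} [LinearOrder W]
    (hWu : ¬ (Set.univ : Set W).Countable) (hWi : ∀ a : W, (Set.Iio a).Countable)
    (jI : W ↪ I) (jB : W ↪ B) :
    ¬ (∀ N : I → V → ℝ, (∀ i, IsNorm (N i)) →
        ∃ N' : V → ℝ, IsNorm N' ∧ ∀ i, ∃ c : ℝ, 0 < c ∧ ∀ x, N i x ≤ c * N' x) := by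
  classical
  have hinjex : ∀ a : W, ∃ f : (Set.Iio a) → ℕ, Function.Injective f := fun a => by
    have := (hWi a).to_subtype
    exact Countable.exists_injective_nat _
  choose hfun hfinj using hinjex
  set M : W → W → ℕ := fun i b => if h : i < b then hfun b ⟨i, h⟩ + 1 else 1 with hM
  have hM1 : ∀ i b, 1 ≤ M i b := by
    intro i b; rw [hM]; dsimp only; split <;> omega
  intro hdom
  set NN : I → V → ℝ := Function.extend jI
    (fun w0 => wNorm bV (Function.extend jB (fun w1 => (M w0 w1 : ℝ)) (fun _ => 1)))
    (fun _ => wNorm bV (fun _ => 1)) with hNN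
  have hnorm : ∀ i, IsNorm (NN i) := by
    intro i
    rw [hNN, Function.extend_def]
    split
    · refine isNorm_wNorm bV (fun b => ?_)
      rw [Function.extend_def]
      split
      · exact Nat.cast_pos.mpr (hM1 _ _)
      · exact one_pos
    · exact isNorm_wNorm bV (fun b => one_pos)
  obtain ⟨N', hN', hdom'⟩ := hdom NN hnorm
  choose c hc hcle using hdom'
  set cw : W → ℝ := fun w0 => c (jI w0) with hcw
  set uu : W → ℝ := fun w1 => N' (bV (jB w1)) with huu
  have hcw0 : ∀ w0, 0 ≤ cw w0 := fun w0 => (hc _).le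
  have huu0 : ∀ w1, 0 ≤ uu w1 := fun w1 => hN'.1 _
  have hMle : ∀ w0 w1, (M w0 w1 : ℝ) ≤ cw w0 * uu w1 := by
    intro w0 w1
    have h1 := hcle (jI w0) (bV (jB w1))
    rw [hNN] at h1
    rw [jI.injective.extend_apply, wNorm_basis, jB.injective.extend_apply] at h1
    exact h1
  have huncount : ∀ q : W → ℝ, ∃ m : ℕ, ¬ {w : W | q w ≤ m}.Countable := by
    intro q
    by_contra hcon
    push_neg at hcon
    refine hWu ?_
    have heq : (Set.univ : Set W) = ⋃ m : ℕ, {w : W | q w ≤ m} := by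
      ext w
      simp only [Set.mem_univ, Set.mem_iUnion, Set.mem_setOf_eq, true_iff]
      obtain ⟨m, hm⟩ := exists_nat_ge (q w)
      exact ⟨m, hm⟩
    rw [heq]
    exact Set.countable_iUnion hcon
  obtain ⟨m₁, hm₁⟩ := huncount cw
  obtain ⟨m₂, hm₂⟩ := huncount uu
  set m := max m₁ m₂ with hm
  have hsub1 : {w : W | cw w ≤ (m₁:ℝ)} ⊆ {w : W | cw w ≤ (m:ℝ)} :=
    fun w hw => le_trans hw (show (m₁:ℝ) ≤ (m:ℝ) by exact_mod_cast le_max_left m₁ m₂)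
  have hsub2 : {w : W | uu w ≤ (m₂:ℝ)} ⊆ {w : W | uu w ≤ (m:ℝ)} :=
    fun w hw => le_trans hw (show (m₂:ℝ) ≤ (m:ℝ) by exact_mod_cast le_max_right m₁ m₂)
  have hAm : ¬ {w : W | cw w ≤ (m:ℝ)}.Countable := fun hcnt => hm₁ (Set.Countable.mono hsub1 hcnt)
  have hBm : ¬ {w : W | uu w ≤ (m:ℝ)}.Countable := fun hcnt => hm₂ (Set.Countable.mono hsub2 hcnt)
  have hAinf : {w : W | cw w ≤ (m:ℝ)}.Infinite := fun hfin => hAm hfin.countable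
  obtain ⟨S, hSsub, hScard⟩ := hAinf.exists_subset_card_eq (m*m+1)
  have hnotsub : ¬ ({w : W | uu w ≤ m} ⊆ ⋃ s ∈ S, Set.Iic s) := by
    intro hsub
    refine hBm (Set.Countable.mono hsub ?_)
    refine Set.Countable.biUnion S.countable_toSet (fun s _ => ?_)
    rw [← Set.Iio_union_right]
    exact (hWi s).union (Set.countable_singleton s)
  obtain ⟨v, hv1, hv2⟩ := Set.not_subset.mp hnotsub
  have hvS : ∀ s ∈ S, s < v := by
    intro s hs
    by_contra hlt
    push_neg at hlt
    exact hv2 (Set.mem_biUnion hs hlt)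
  set φ : {x // x ∈ S} → ℕ := fun s => hfun v ⟨s.1, hvS s.1 s.2⟩ with hφ
  have hφinj : Function.Injective φ := by
    intro s t hst
    have h0 := hfinj v hst
    have h2 : s.1 = t.1 := Subtype.mk_eq_mk.mp h0
    exact Subtype.ext h2
  set T : Finset ℕ := S.attach.image φ with hT
  have hTcard : T.card = m*m+1 := by
    rw [hT, Finset.card_image_of_injective _ hφinj, Finset.card_attach, hScard]
  have hbig : ∃ t ∈ T, m*m ≤ t := by
    by_contra hcon
    push_neg at hcon
    have hsub : T ⊆ Finset.range (m*m) := fun t ht => Finset.mem_range.2 (hcon t ht)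
    have := Finset.card_le_card hsub
    rw [hTcard, Finset.card_range] at this
    omega
  obtain ⟨t, htT, htge⟩ := hbig
  obtain ⟨s, _, hst⟩ := Finset.mem_image.mp htT
  have hMsv : M s.1 v = t + 1 := by
    rw [hM]
    dsimp only
    rw [dif_pos (hvS s.1 s.2)]
    rw [← hst]
  have h1 : cw s.1 ≤ m := hSsub s.2
  have h2 : uu v ≤ m := hv1
  have h3 := hMle s.1 v
  rw [hMsv] at h3
  have h4 : cw s.1 * uu v ≤ (m:ℝ) * m :=
    mul_le_mul h1 h2 (huu0 v) (Nat.cast_nonneg m)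
  have h5 : ((m*m : ℕ) : ℝ) ≤ (t : ℝ) := by exact_mod_cast htge
  push_cast at h3 h5
  linarith

end sierp

lemma aleph1_le_of_not_countable {α : Type w} (hα : ¬ Countable α) :
    Cardinal.lift.{w} (Cardinal.mk (((Cardinal.aleph 1 : Cardinal.{0})).ord.ToType)) ≤
      Cardinal.lift.{0} (Cardinal.mk α) := by
  rw [Cardinal.mk_toType, Cardinal.card_ord, Cardinal.lift_uzero]
  have h5 : Cardinal.aleph0 < Cardinal.mk α := by
    rw [← not_le, Cardinal.mk_le_aleph0_iff]
    exact hα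
  have h6 : Cardinal.lift.{w} (Cardinal.aleph 1) = Cardinal.aleph 1 := by
    rw [Cardinal.lift_aleph, Ordinal.lift_one]
  rw [h6, ← Cardinal.succ_aleph0]
  exact Order.succ_le_of_lt h5

/-- Every `I`-indexed family of norms on `V` is dominated iff `V` is
finite-dimensional, or `I` is finite, or `V` has countable dimension and `#I < 𝔟`,
or `I` is countable and `dim V < 𝔟`. -/
theorem stmt6 {V : Type u} [AddCommGroup V] [Module ℝ V] (I : Type v) :
    (∀ N : I → V → ℝ, (∀ i, IsNorm (N i)) →
        ∃ N' : V → ℝ, IsNorm N' ∧ ∀ i, ∃ c : ℝ, 0 < c ∧ ∀ x, N i x ≤ c * N' x) ↔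
      (FiniteDimensional ℝ V ∨ Finite I ∨
        (Module.rank ℝ V ≤ Cardinal.aleph0 ∧
          Cardinal.mk I < Cardinal.lift.{v} boundingNumber) ∨
        (Countable I ∧ Module.rank ℝ V < Cardinal.lift.{u} boundingNumber)) := by
  classical
  set bV := Module.Basis.ofVectorSpace ℝ V with hbV
  have hrank : Cardinal.mk (Module.Basis.ofVectorSpaceIndex ℝ V) = Module.rank ℝ V :=
    bV.mk_eq_rank''
  constructor
  · -- forward: contrapositive
    intro hdom
    by_contra hcon
    push_neg at hcon
    obtain ⟨h1, h2, h3, h4⟩ := hcon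
    have hBinf : Infinite (Module.Basis.ofVectorSpaceIndex ℝ V) := by
      rw [← not_finite_iff_infinite]
      intro hfin
      exact h1 (Module.Finite.of_basis bV)
    have hIinf : Infinite I := h2
    by_cases hr : Module.rank ℝ V ≤ Cardinal.aleph0
    · -- countable dimension, many norms
      have hBcard : Cardinal.mk (Module.Basis.ofVectorSpaceIndex ℝ V) = Cardinal.aleph0 :=
        le_antisymm (hrank ▸ hr) (Cardinal.infinite_iff.mp hBinf)
      have hne : Nonempty ((Module.Basis.ofVectorSpaceIndex ℝ V) ≃ ℕ) := by
        rw [← Cardinal.lift_mk_eq']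
        rw [Cardinal.lift_uzero, hBcard, Cardinal.mk_nat, Cardinal.lift_aleph0]
      obtain ⟨e⟩ := hne
      have hI : Cardinal.lift.{v} boundingNumber ≤ Cardinal.mk I := h3 hr
      exact forward_caseB bV e hI hdom
    · push_neg at hr
      by_cases hIc : Countable I
      · -- countable index, huge dimension
        have hIcard : Cardinal.mk I = Cardinal.aleph0 :=
          le_antisymm (Cardinal.mk_le_aleph0_iff.mpr hIc) (Cardinal.infinite_iff.mp hIinf)
        have hne : Nonempty (I ≃ ℕ) := by
          rw [← Cardinal.lift_mk_eq']
          rw [Cardinal.lift_uzero, hIcard, Cardinal.mk_nat, Cardinal.lift_aleph0]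
        obtain ⟨e⟩ := hne
        have hB : Cardinal.lift.{u} boundingNumber ≤ Cardinal.mk (Module.Basis.ofVectorSpaceIndex ℝ V) := by
          rw [hrank]
          exact h4 hIc
        exact forward_caseC2 bV e hB hdom
      · -- both uncountable: Sierpiński coloring
        set W := (Cardinal.aleph 1).ord.ToType with hW
        have hWcard : Cardinal.mk W = Cardinal.aleph 1 := by
          rw [hW, Cardinal.mk_toType, Cardinal.card_ord]
        have hWu : ¬ (Set.univ : Set W).Countable := by
          rw [Cardinal.countable_iff_lt_aleph_one, Cardinal.mk_univ, hWcard]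
          exact lt_irrefl _
        have hWi : ∀ a : W, (Set.Iio a).Countable := fun a =>
          (Cardinal.countable_iff_lt_aleph_one _).mpr (Cardinal.mk_Iio_ord_toType a)
        obtain ⟨jI⟩ := Cardinal.lift_mk_le'.mp (aleph1_le_of_not_countable (α := I) hIc)
        have hBc : ¬ Countable (Module.Basis.ofVectorSpaceIndex ℝ V) := by
          rw [← Cardinal.mk_le_aleph0_iff, hrank]
          exact not_le.mpr hr
        obtain ⟨jB⟩ := Cardinal.lift_mk_le'.mp (aleph1_le_of_not_countable (α := (Module.Basis.ofVectorSpaceIndex ℝ V)) hBc)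
        exact forward_caseC1 bV hWu hWi jI jB hdom
  · -- backward
    intro hcond N hN
    have key : ∃ c : I → ℝ, ∃ w : (Module.Basis.ofVectorSpaceIndex ℝ V) → ℝ,
        (∀ i, 1 ≤ c i) ∧ (∀ b, 1 ≤ w b) ∧ ∀ i b, N i (bV b) ≤ c i * w b := by
      rcases hcond with h | h | ⟨h1', h2'⟩ | ⟨h1', h2'⟩
      · exact matrix_dom_finite_right _
      · exact matrix_dom_finite_left _
      · have : Countable (Module.Basis.ofVectorSpaceIndex ℝ V) := by
          rw [← Cardinal.mk_le_aleph0_iff, hrank]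
          exact h1'
        exact matrix_dom (fun i b => N i (bV b)) h2'
      · have hlt : Cardinal.mk (Module.Basis.ofVectorSpaceIndex ℝ V) <
            Cardinal.lift.{u} boundingNumber := by rw [hrank]; exact h2'
        obtain ⟨c, w, hc, hw, hM⟩ := matrix_dom (fun b i => N i (bV b)) hlt
        exact ⟨w, c, hw, hc, fun i b => by rw [mul_comm]; exact hM b i⟩
    obtain ⟨c, w, hc, hw, hM⟩ := key
    refine ⟨wNorm bV w, isNorm_wNorm bV (fun b => lt_of_lt_of_le one_pos (hw b)),
      fun i => ⟨c i, lt_of_lt_of_le one_pos (hc i), ?_⟩⟩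
    exact le_wNorm bV (hN i) (fun b => lt_of_lt_of_le one_pos (hw b))
      (lt_of_lt_of_le one_pos (hc i)) (hM i)
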